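/- arXiv:1309.6013 — 4 statements merged into one kernel-verified Lean document; each statement's English description precedes it below -/
import Mathlib

section
/- For every matrix M ∈ ℝ^{d1×d2}, the trace-norm satisfies ‖M‖_* / √(d1 d2) ≤ ‖M‖_max; equivalently, ‖M‖_* ≤ √(d1 d2) · ‖M‖_max. -/
open scoped BigOperators
open Matrix

/-- The trace-norm (nuclear norm) of a real matrix: the sum of its singular values,
i.e. the square roots of the eigenvalues of `M * Mᵀ`. -/
noncomputable def traceNorm {d1 d2 : ℕ} (M : Matrix (Fin d1) (Fin d2) ℝ) : ℝ :=
  ∑ i, Real.sqrt ((Matrix.isHermitian_mul_conjTranspose_self M).eigenvalues i)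

/-- The largest `ℓ₂`-norm of a row of a matrix (the `(2,∞)` operator norm). -/
noncomputable def rowMaxNorm {n k : ℕ} (U : Matrix (Fin n) (Fin k) ℝ) : ℝ :=
  ⨆ i, Real.sqrt (∑ j, (U i j) ^ 2)

/-- The max-norm of a real matrix: the infimum of `‖U‖_{2,∞} ‖V‖_{2,∞}` over all
factorizations `M = U * Vᵀ`. -/
noncomputable def maxNorm {d1 d2 : ℕ} (M : Matrix (Fin d1) (Fin d2) ℝ) : ℝ :=
  sInf { c : ℝ | ∃ (k : ℕ) (U : Matrix (Fin d1) (Fin k) ℝ) (V : Matrix (Fin d2) (Fin k) ℝ),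
    0 < k ∧ M = U * Vᵀ ∧ c = rowMaxNorm U * rowMaxNorm V }

section aux

variable {d1 d2 k : ℕ}

lemma conjT_eq_transpose (M : Matrix (Fin d1) (Fin d2) ℝ) : Mᴴ = Mᵀ := by
  ext i j; simp [conjTranspose_apply]

/-- orthonormality of eigenvector columns as dot products -/
lemma eig_orth (M : Matrix (Fin d1) (Fin d2) ℝ) (i i' : Fin d1) :
    (⇑((Matrix.isHermitian_mul_conjTranspose_self M).eigenvectorBasis i) ⬝ᵥ
      ⇑((Matrix.isHermitian_mul_conjTranspose_self M).eigenvectorBasis i'))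
      = if i = i' then 1 else 0 := by
  have h := orthonormal_iff_ite.mp
    (Matrix.isHermitian_mul_conjTranspose_self M).eigenvectorBasis.orthonormal i i'
  simpa [PiLp.inner_apply, dotProduct, RCLike.inner_apply, mul_comm] using h

/-- completeness: rows of eigenvector matrix orthonormal -/
lemma eig_complete (M : Matrix (Fin d1) (Fin d2) ℝ) (j j' : Fin d1) :
    (∑ i, (⇑((Matrix.isHermitian_mul_conjTranspose_self M).eigenvectorBasis i) j) *
      (⇑((Matrix.isHermitian_mul_conjTranspose_self M).eigenvectorBasis i) j'))
      = if j = j' then 1 else 0 := by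
  set hA := Matrix.isHermitian_mul_conjTranspose_self M
  have h : (hA.eigenvectorUnitary : Matrix (Fin d1) (Fin d1) ℝ) *
      star (hA.eigenvectorUnitary : Matrix (Fin d1) (Fin d1) ℝ) = 1 :=
    hA.eigenvectorUnitary.prop.2
  have h2 := congrFun (congrFun h j) j'
  simpa [Matrix.mul_apply, Matrix.one_apply, Matrix.IsHermitian.eigenvectorUnitary_apply,
    Matrix.star_apply] using h2

end aux

lemma key_lemma {d1 d2 k : ℕ} (M : Matrix (Fin d1) (Fin d2) ℝ)
    (U : Matrix (Fin d1) (Fin k) ℝ) (V : Matrix (Fin d2) (Fin k) ℝ)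
    (hM : M = U * Vᵀ) :
    traceNorm M ≤ Real.sqrt (∑ j, ∑ t, (U j t)^2) * Real.sqrt (∑ j, ∑ t, (V j t)^2) := by
  classical
  set hA := Matrix.isHermitian_mul_conjTranspose_self M with hhA
  set lam : Fin d1 → ℝ := hA.eigenvalues with hlam
  set a : Fin d1 → (Fin d1 → ℝ) := fun i => ⇑(hA.eigenvectorBasis i) with ha
  set s : Fin d1 → ℝ := fun i => Real.sqrt (lam i) with hs
  have hlam_nonneg : ∀ i, 0 ≤ lam i :=
    fun i => (Matrix.posSemidef_self_mul_conjTranspose M).eigenvalues_nonneg i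
  have hMMt : M * Mᵀ = M * Mᴴ := by rw [conjT_eq_transpose]
  have hAv : ∀ i, (M * Mᴴ) *ᵥ a i = lam i • a i := fun i => hA.mulVec_eigenvectorBasis i
  set b : Fin d1 → (Fin d2 → ℝ) := fun i => (s i)⁻¹ • (Mᵀ *ᵥ a i) with hb
  set x : Fin d1 → (Fin k → ℝ) := fun i => Uᵀ *ᵥ a i with hx
  set y : Fin d1 → (Fin k → ℝ) := fun i => Vᵀ *ᵥ b i with hy
  -- basic dot-product computation
  have hdot : ∀ (i i' : Fin d1), (Mᵀ *ᵥ a i) ⬝ᵥ (Mᵀ *ᵥ a i')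
      = lam i' * (if i = i' then 1 else 0) := by
    intro i i'
    have h1 : (Mᵀ *ᵥ a i) ⬝ᵥ (Mᵀ *ᵥ a i') = a i ⬝ᵥ ((M * Mᵀ) *ᵥ a i') := by
      rw [Matrix.mulVec_transpose, ← Matrix.dotProduct_mulVec, Matrix.mulVec_mulVec]
    rw [h1, hMMt, hAv i', dotProduct_smul, eig_orth M i i']
    simp [smul_eq_mul]
  -- x ⬝ᵥ y = s i when s i ≠ 0
  have hxy : ∀ i, s i ≠ 0 → x i ⬝ᵥ y i = s i := by
    intro i hi
    have h1 : x i ⬝ᵥ y i = (s i)⁻¹ * ((Uᵀ *ᵥ a i) ⬝ᵥ (Vᵀ *ᵥ (Mᵀ *ᵥ a i))) := by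
      simp only [hx, hy, hb, Matrix.mulVec_smul, dotProduct_smul, smul_eq_mul]
    have h2 : (Uᵀ *ᵥ a i) ⬝ᵥ (Vᵀ *ᵥ (Mᵀ *ᵥ a i)) = a i ⬝ᵥ ((M * Mᴴ) *ᵥ a i) := by
      rw [Matrix.mulVec_transpose, ← Matrix.dotProduct_mulVec, Matrix.mulVec_mulVec,
        Matrix.mulVec_mulVec, ← hM, hMMt]
    have h3 : a i ⬝ᵥ ((M * Mᴴ) *ᵥ a i) = lam i := by
      rw [hAv i, dotProduct_smul, eig_orth M i i]
      simp [smul_eq_mul]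
    have h4 : lam i = s i * s i := by
      rw [hs]; exact (Real.mul_self_sqrt (hlam_nonneg i)).symm
    rw [h1, h2, h3, h4, ← mul_assoc, inv_mul_cancel₀ hi, one_mul]
  have hy0 : ∀ i, s i = 0 → y i = 0 := by
    intro i hi
    simp only [hy, hb, hi, _root_.inv_zero, zero_smul, Matrix.mulVec_zero]
  -- per-index Cauchy-Schwarz
  have step2 : ∀ i, s i ≤ Real.sqrt (∑ t, (x i t)^2) * Real.sqrt (∑ t, (y i t)^2) := by
    intro i
    by_cases hi : s i = 0
    · rw [hi]; positivity
    · have h5 : x i ⬝ᵥ y i ≤ Real.sqrt (∑ t, (x i t)^2) * Real.sqrt (∑ t, (y i t)^2) := by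
        have hcs := Finset.sum_mul_sq_le_sq_mul_sq Finset.univ (x i) (y i)
        have h6 : x i ⬝ᵥ y i ≤ |x i ⬝ᵥ y i| := le_abs_self _
        refine h6.trans ?_
        rw [← Real.sqrt_sq_eq_abs, ← Real.sqrt_mul (by positivity)]
        exact Real.sqrt_le_sqrt hcs
      rw [← hxy i hi]; exact h5
  -- sum Cauchy-Schwarz
  have step3 : ∑ i, s i ≤ Real.sqrt (∑ i, ∑ t, (x i t)^2) * Real.sqrt (∑ i, ∑ t, (y i t)^2) := by
    have h1 : ∑ i, ∑ t, (x i t)^2 = ∑ i, (Real.sqrt (∑ t, (x i t)^2))^2 :=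
      Finset.sum_congr rfl fun i _ => (Real.sq_sqrt (by positivity)).symm
    have h2 : ∑ i, ∑ t, (y i t)^2 = ∑ i, (Real.sqrt (∑ t, (y i t)^2))^2 :=
      Finset.sum_congr rfl fun i _ => (Real.sq_sqrt (by positivity)).symm
    rw [h1, h2]
    have hcs := Finset.sum_mul_sq_le_sq_mul_sq Finset.univ
      (fun i => Real.sqrt (∑ t, (x i t)^2)) (fun i => Real.sqrt (∑ t, (y i t)^2))
    have hnn : (0:ℝ) ≤ ∑ i, Real.sqrt (∑ t, (x i t)^2) * Real.sqrt (∑ t, (y i t)^2) := by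
      positivity
    calc ∑ i, s i ≤ ∑ i, Real.sqrt (∑ t, (x i t)^2) * Real.sqrt (∑ t, (y i t)^2) :=
          Finset.sum_le_sum fun i _ => step2 i
      _ = Real.sqrt ((∑ i, Real.sqrt (∑ t, (x i t)^2) * Real.sqrt (∑ t, (y i t)^2))^2) :=
          (Real.sqrt_sq hnn).symm
      _ ≤ Real.sqrt ((∑ i, (Real.sqrt (∑ t, (x i t)^2))^2) * ∑ i, (Real.sqrt (∑ t, (y i t)^2))^2) :=
          Real.sqrt_le_sqrt hcs
      _ = _ := Real.sqrt_mul (by positivity) _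
  -- evaluate ∑∑ x²
  have hXfrob : ∑ i, ∑ t, (x i t)^2 = ∑ j, ∑ t, (U j t)^2 := by
    have hxval : ∀ i t, x i t = ∑ j, U j t * a i j := by
      intro i t
      simp [hx, Matrix.mulVec, dotProduct, Matrix.transpose_apply]
    have hcol : ∀ t : Fin k, ∑ i, (x i t)^2 = ∑ j, (U j t)^2 := by
      intro t
      calc ∑ i, (x i t)^2
          = ∑ i, ∑ j, ∑ j', (U j t * a i j) * (U j' t * a i j') := by
            refine Finset.sum_congr rfl fun i _ => ?_
            rw [hxval i t, pow_two, Finset.sum_mul_sum]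
        _ = ∑ j, ∑ j', (U j t * U j' t) * ∑ i, a i j * a i j' := by
            rw [Finset.sum_comm]
            refine Finset.sum_congr rfl fun j _ => ?_
            rw [Finset.sum_comm]
            refine Finset.sum_congr rfl fun j' _ => ?_
            rw [Finset.mul_sum]
            exact Finset.sum_congr rfl fun i _ => by ring
        _ = ∑ j, ∑ j', (U j t * U j' t) * (if j = j' then 1 else 0) := by
            refine Finset.sum_congr rfl fun j _ => Finset.sum_congr rfl fun j' _ => ?_
            rw [eig_complete M j j']
        _ = ∑ j, (U j t)^2 := by
            refine Finset.sum_congr rfl fun j _ => ?_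
            rw [Finset.sum_eq_single j]
            · rw [if_pos rfl, mul_one, pow_two]
            · intro j' _ hne
              rw [if_neg (Ne.symm hne), mul_zero]
            · intro h; exact absurd (Finset.mem_univ j) h
    calc ∑ i, ∑ t, (x i t)^2 = ∑ t, ∑ i, (x i t)^2 := Finset.sum_comm
      _ = ∑ t, ∑ j, (U j t)^2 := Finset.sum_congr rfl fun t _ => hcol t
      _ = ∑ j, ∑ t, (U j t)^2 := Finset.sum_comm
  -- Bessel bound for ∑∑ y²
  have hYfrob : ∑ i, ∑ t, (y i t)^2 ≤ ∑ j, ∑ t, (V j t)^2 := by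
    have hbval : ∀ i i', b i ⬝ᵥ b i'
        = (s i)⁻¹ * ((s i')⁻¹ * (lam i' * (if i = i' then 1 else 0))) := by
      intro i i'
      simp only [hb, smul_dotProduct, dotProduct_smul, smul_eq_mul]
      rw [hdot]
      ring
    have hborth : ∀ i i' : Fin d1, s i ≠ 0 → s i' ≠ 0 →
        b i ⬝ᵥ b i' = if i = i' then 1 else 0 := by
      intro i i' hi hi'
      by_cases h : i = i'
      · subst h
        have h4 : lam i = s i * s i := (Real.mul_self_sqrt (hlam_nonneg i)).symm
        rw [hbval, h4]
        simp only [if_pos rfl, mul_one]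
        field_simp
      · rw [hbval]
        simp [h]
    set P : Fin d1 → Prop := fun i => s i ≠ 0 with hP
    set Bv : {i // P i} → EuclideanSpace ℝ (Fin d2) :=
      fun i => (WithLp.equiv 2 (Fin d2 → ℝ)).symm (b i.1) with hBv
    have hBinner : ∀ (i i' : {i // P i}),
        (inner ℝ (Bv i) (Bv i') : ℝ) = b i.1 ⬝ᵥ b i'.1 := by
      intro i i'
      simp [hBv, PiLp.inner_apply, dotProduct, RCLike.inner_apply, mul_comm]
    have hBorth : Orthonormal ℝ Bv := by
      rw [orthonormal_iff_ite]
      intro i i'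
      rw [hBinner, hborth i.1 i'.1 i.2 i'.2]
      simp [Subtype.ext_iff]
    have hyval : ∀ i t, y i t = ∑ j, V j t * b i j := by
      intro i t
      simp [hy, Matrix.mulVec, dotProduct, Matrix.transpose_apply]
    have hcol : ∀ t : Fin k, ∑ i, (y i t)^2 ≤ ∑ j, (V j t)^2 := by
      intro t
      set w : EuclideanSpace ℝ (Fin d2) := (WithLp.equiv 2 (Fin d2 → ℝ)).symm (fun j => V j t)
        with hw
      have hb1 := hBorth.sum_inner_products_le (s := Finset.univ) w
      have hinner : ∀ i : {i // P i}, (inner ℝ (Bv i) w : ℝ) = y i.1 t := by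
        intro i
        rw [hyval]
        simp [hBv, hw, PiLp.inner_apply, RCLike.inner_apply, mul_comm]
      have hwnorm : ‖w‖^2 = ∑ j, (V j t)^2 := by
        rw [EuclideanSpace.norm_eq, Real.sq_sqrt (by positivity)]
        simp [hw, Real.norm_eq_abs, sq_abs]
      have hzero : ∀ i ∈ Finset.univ, (y i t)^2 ≠ 0 → P i := by
        intro i _ hne
        by_contra hPc
        rw [hy0 i hPc] at hne
        simp at hne
      have h1 : ∑ i ∈ Finset.univ.filter P, (y i t)^2 = ∑ i, (y i t)^2 :=
        Finset.sum_filter_of_ne hzero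
      have h2 : ∑ i ∈ Finset.univ.filter P, (y i t)^2 = ∑ i : {i // P i}, (y i.1 t)^2 :=
        Finset.sum_subtype _ (by simp) _
      calc ∑ i, (y i t)^2 = ∑ i : {i // P i}, (y i.1 t)^2 := by rw [← h1, h2]
        _ = ∑ i : {i // P i}, ‖(inner ℝ (Bv i) w : ℝ)‖^2 := by
            refine Finset.sum_congr rfl fun i _ => ?_
            rw [hinner i, Real.norm_eq_abs, sq_abs]
        _ ≤ ‖w‖^2 := hb1
        _ = ∑ j, (V j t)^2 := hwnorm
    calc ∑ i, ∑ t, (y i t)^2 = ∑ t, ∑ i, (y i t)^2 := Finset.sum_comm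
      _ ≤ ∑ t, ∑ j, (V j t)^2 := Finset.sum_le_sum fun t _ => hcol t
      _ = ∑ j, ∑ t, (V j t)^2 := Finset.sum_comm
  -- combine
  have htn : traceNorm M = ∑ i, s i := rfl
  rw [htn]
  refine step3.trans ?_
  rw [hXfrob]
  exact mul_le_mul_of_nonneg_left (Real.sqrt_le_sqrt hYfrob) (Real.sqrt_nonneg _)

lemma rowMaxNorm_nonneg {n k : ℕ} (U : Matrix (Fin n) (Fin k) ℝ) : 0 ≤ rowMaxNorm U :=
  Real.iSup_nonneg fun _ => Real.sqrt_nonneg _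

lemma sqrt_frob_le {n k : ℕ} (U : Matrix (Fin n) (Fin k) ℝ) :
    Real.sqrt (∑ j, ∑ t, (U j t)^2) ≤ Real.sqrt n * rowMaxNorm U := by
  have hrow : ∀ j, Real.sqrt (∑ t, (U j t)^2) ≤ rowMaxNorm U := fun j =>
    le_ciSup (f := fun i => Real.sqrt (∑ t, (U i t)^2))
      (Set.Finite.bddAbove (Set.finite_range _)) j
  have h1 : ∑ j, ∑ t, (U j t)^2 ≤ (n : ℝ) * (rowMaxNorm U)^2 := by
    calc ∑ j, ∑ t, (U j t)^2 ≤ ∑ _j : Fin n, (rowMaxNorm U)^2 := by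
          refine Finset.sum_le_sum fun j _ => ?_
          have h2 : ∑ t, (U j t)^2 = (Real.sqrt (∑ t, (U j t)^2))^2 :=
            (Real.sq_sqrt (by positivity)).symm
          rw [h2]
          exact pow_le_pow_left₀ (Real.sqrt_nonneg _) (hrow j) 2
      _ = (n : ℝ) * (rowMaxNorm U)^2 := by
          rw [Finset.sum_const, Finset.card_univ, Fintype.card_fin, nsmul_eq_mul]
  calc Real.sqrt (∑ j, ∑ t, (U j t)^2) ≤ Real.sqrt ((n:ℝ) * (rowMaxNorm U)^2) :=
        Real.sqrt_le_sqrt h1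
    _ = Real.sqrt n * rowMaxNorm U := by
        rw [Real.sqrt_mul (by positivity), Real.sqrt_sq (rowMaxNorm_nonneg U)]

lemma traceNorm_le_fact {d1 d2 k : ℕ} (M : Matrix (Fin d1) (Fin d2) ℝ)
    (U : Matrix (Fin d1) (Fin k) ℝ) (V : Matrix (Fin d2) (Fin k) ℝ)
    (hM : M = U * Vᵀ) :
    traceNorm M ≤ Real.sqrt (d1 * d2 : ℝ) * (rowMaxNorm U * rowMaxNorm V) := by
  refine (key_lemma M U V hM).trans ?_
  have h := mul_le_mul (sqrt_frob_le U) (sqrt_frob_le V) (Real.sqrt_nonneg _)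
    (mul_nonneg (Real.sqrt_nonneg _) (rowMaxNorm_nonneg U))
  refine h.trans (le_of_eq ?_)
  rw [Real.sqrt_mul (by positivity)]
  ring


/-- for every real matrix `M`, `‖M‖_* ≤ √(d1 d2) · ‖M‖_max`. -/
theorem traceNorm_le_sqrt_dim_mul_maxNorm
    {d1 d2 : ℕ} (M : Matrix (Fin d1) (Fin d2) ℝ) :
    traceNorm M ≤ Real.sqrt (d1 * d2) * maxNorm M := by

  classical
  set S := { c : ℝ | ∃ (k : ℕ) (U : Matrix (Fin d1) (Fin k) ℝ) (V : Matrix (Fin d2) (Fin k) ℝ),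
    0 < k ∧ M = U * Vᵀ ∧ c = rowMaxNorm U * rowMaxNorm V } with hS
  have hSnonneg : ∀ c ∈ S, 0 ≤ c := by
    rintro c ⟨k, U, V, hk, hMUV, rfl⟩
    exact mul_nonneg (rowMaxNorm_nonneg U) (rowMaxNorm_nonneg V)
  have hmn : maxNorm M = sInf S := rfl
  by_cases h0 : d1 = 0 ∨ d2 = 0
  · -- degenerate case : M = 0 and both sides reduce
    have hM0 : M = (0 : Matrix (Fin d1) (Fin d2) ℝ) := by
      ext i j
      rcases h0 with h | h
      · exact absurd i.isLt (by omega)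
      · exact absurd j.isLt (by omega)
    have hkey := key_lemma M (0 : Matrix (Fin d1) (Fin 1) ℝ) (0 : Matrix (Fin d2) (Fin 1) ℝ)
      (by rw [hM0]; simp)
    have htn : traceNorm M ≤ 0 := by simpa using hkey
    have hne : S.Nonempty := ⟨rowMaxNorm (0 : Matrix (Fin d1) (Fin 1) ℝ) *
        rowMaxNorm (0 : Matrix (Fin d2) (Fin 1) ℝ),
      1, 0, 0, Nat.one_pos, by rw [hM0]; simp, rfl⟩
    have hinf : 0 ≤ sInf S := le_csInf hne hSnonneg
    have : 0 ≤ Real.sqrt (d1 * d2) * maxNorm M := by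
      rw [hmn]; exact mul_nonneg (Real.sqrt_nonneg _) hinf
    linarith
  · push_neg at h0
    have hd2 : 0 < d2 := Nat.pos_of_ne_zero h0.2
    have hd1 : 0 < d1 := Nat.pos_of_ne_zero h0.1
    have hne : S.Nonempty := by
      refine ⟨rowMaxNorm M * rowMaxNorm (1 : Matrix (Fin d2) (Fin d2) ℝ), d2, M, 1, hd2, ?_, rfl⟩
      rw [Matrix.transpose_one, Matrix.mul_one]
    have hsqrt_pos : 0 < Real.sqrt ((d1 : ℝ) * d2) := Real.sqrt_pos.mpr (by positivity)
    have hlb : traceNorm M / Real.sqrt ((d1 : ℝ) * d2) ≤ sInf S := by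
      refine le_csInf hne ?_
      rintro c ⟨k, U, V, hk, hMUV, rfl⟩
      rw [div_le_iff₀ hsqrt_pos]
      calc traceNorm M ≤ Real.sqrt ((d1 : ℝ) * d2) * (rowMaxNorm U * rowMaxNorm V) :=
            traceNorm_le_fact M U V hMUV
        _ = rowMaxNorm U * rowMaxNorm V * Real.sqrt ((d1 : ℝ) * d2) := by ring
    calc traceNorm M
        = Real.sqrt ((d1 : ℝ) * d2) * (traceNorm M / Real.sqrt ((d1 : ℝ) * d2)) := by
          field_simp
      _ ≤ Real.sqrt ((d1 : ℝ) * d2) * sInf S :=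
          mul_le_mul_of_nonneg_left hlb (Real.sqrt_nonneg _)
      _ = Real.sqrt (d1 * d2) * maxNorm M := by rw [hmn]
end

section
/- For every matrix M ∈ ℝ^{d1×d2}, the max-norm satisfies ‖M‖_∞ ≤ ‖M‖_max ≤ √(rank(M)) · ‖M‖_∞, where ‖M‖_∞ = max_{k,l} |M_{k,l}| is the elementwise ℓ∞-norm. -/
open scoped BigOperators
open Matrix

/-- The elementwise `ℓ∞`-norm of a matrix: `max_{k,l} |M_{k,l}|`. -/
noncomputable def linfNorm {d1 d2 : ℕ} (M : Matrix (Fin d1) (Fin d2) ℝ) : ℝ :=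
  ⨆ k, ⨆ l, |M k l|

lemma row_le_rowMaxNorm {n k : ℕ} (U : Matrix (Fin n) (Fin k) ℝ) (i : Fin n) :
    Real.sqrt (∑ j, (U i j) ^ 2) ≤ rowMaxNorm U := by
  rw [rowMaxNorm]
  exact le_ciSup (f := fun i => Real.sqrt (∑ j, (U i j) ^ 2))
    (Set.Finite.bddAbove (Set.finite_range _)) i

lemma linfNorm_nonneg {d1 d2 : ℕ} (M : Matrix (Fin d1) (Fin d2) ℝ) : 0 ≤ linfNorm M :=
  Real.iSup_nonneg fun _ => Real.iSup_nonneg fun _ => abs_nonneg _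

lemma abs_entry_le_linfNorm {d1 d2 : ℕ} (M : Matrix (Fin d1) (Fin d2) ℝ) (k : Fin d1)
    (l : Fin d2) : |M k l| ≤ linfNorm M := by
  have h1 : |M k l| ≤ ⨆ l', |M k l'| :=
    le_ciSup (f := fun l' => |M k l'|) (Set.Finite.bddAbove (Set.finite_range _)) l
  refine h1.trans ?_
  rw [linfNorm]
  exact le_ciSup (f := fun k' => ⨆ l', |M k' l'|) (Set.Finite.bddAbove (Set.finite_range _)) k

lemma abs_entry_le_prod {d1 d2 k : ℕ} (U : Matrix (Fin d1) (Fin k) ℝ)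
    (V : Matrix (Fin d2) (Fin k) ℝ) (i : Fin d1) (l : Fin d2) :
    |(U * Vᵀ) i l| ≤ rowMaxNorm U * rowMaxNorm V := by
  have hcs : ((U * Vᵀ) i l) ^ 2 ≤ (∑ j, (U i j) ^ 2) * (∑ j, (V l j) ^ 2) := by
    rw [Matrix.mul_apply]
    simpa [Matrix.transpose_apply] using
      Finset.sum_mul_sq_le_sq_mul_sq Finset.univ (fun j => U i j) (fun j => V l j)
  have h2 : |(U * Vᵀ) i l| ≤ Real.sqrt (∑ j, (U i j) ^ 2) * Real.sqrt (∑ j, (V l j) ^ 2) := by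
    rw [← Real.sqrt_mul (Finset.sum_nonneg fun j _ => sq_nonneg _)]
    rw [← Real.sqrt_sq_eq_abs]
    exact Real.sqrt_le_sqrt hcs
  exact h2.trans (mul_le_mul (row_le_rowMaxNorm U i) (row_le_rowMaxNorm V l)
    (Real.sqrt_nonneg _) (rowMaxNorm_nonneg U))

lemma maxNorm_set_nonneg {d1 d2 : ℕ} (M : Matrix (Fin d1) (Fin d2) ℝ) :
    ∀ c ∈ { c : ℝ | ∃ (k : ℕ) (U : Matrix (Fin d1) (Fin k) ℝ) (V : Matrix (Fin d2) (Fin k) ℝ),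
      0 < k ∧ M = U * Vᵀ ∧ c = rowMaxNorm U * rowMaxNorm V }, 0 ≤ c := by
  rintro c ⟨k, U, V, hk, hM, rfl⟩
  exact mul_nonneg (rowMaxNorm_nonneg U) (rowMaxNorm_nonneg V)

lemma maxNorm_set_bddBelow {d1 d2 : ℕ} (M : Matrix (Fin d1) (Fin d2) ℝ) :
    BddBelow { c : ℝ | ∃ (k : ℕ) (U : Matrix (Fin d1) (Fin k) ℝ) (V : Matrix (Fin d2) (Fin k) ℝ),
      0 < k ∧ M = U * Vᵀ ∧ c = rowMaxNorm U * rowMaxNorm V } :=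
  ⟨0, maxNorm_set_nonneg M⟩

lemma maxNorm_set_nonempty {d1 d2 : ℕ} (M : Matrix (Fin d1) (Fin d2) ℝ) :
    Set.Nonempty { c : ℝ | ∃ (k : ℕ) (U : Matrix (Fin d1) (Fin k) ℝ)
      (V : Matrix (Fin d2) (Fin k) ℝ),
      0 < k ∧ M = U * Vᵀ ∧ c = rowMaxNorm U * rowMaxNorm V } := by
  classical
  set U : Matrix (Fin d1) (Fin (d2 + 1)) ℝ :=
    fun i j => if h : (j : ℕ) < d2 then M i ⟨j, h⟩ else 0 with hU
  set V : Matrix (Fin d2) (Fin (d2 + 1)) ℝ :=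
    fun l j => if j = Fin.castSucc l then 1 else 0 with hV
  refine ⟨rowMaxNorm U * rowMaxNorm V, d2 + 1, U, V, Nat.succ_pos _, ?_, rfl⟩
  ext i l
  rw [Matrix.mul_apply]
  have : ∀ j, U i j * Vᵀ j l = if j = Fin.castSucc l then U i j else 0 := by
    intro j
    simp only [Matrix.transpose_apply, hV]
    by_cases h : j = Fin.castSucc l <;> simp [h, Matrix.transpose_apply, Matrix.transpose, Matrix.of_apply]
  simp only [this, Finset.sum_ite_eq' Finset.univ, Finset.mem_univ, if_true]
  simp [hU, Fin.is_lt]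

lemma maxNorm_le_of_mem {d1 d2 k : ℕ} (M : Matrix (Fin d1) (Fin d2) ℝ)
    (U : Matrix (Fin d1) (Fin k) ℝ) (V : Matrix (Fin d2) (Fin k) ℝ)
    (hk : 0 < k) (hM : M = U * Vᵀ) : maxNorm M ≤ rowMaxNorm U * rowMaxNorm V := by
  exact csInf_le (maxNorm_set_bddBelow M) ⟨k, U, V, hk, hM, rfl⟩

lemma linfNorm_le_maxNorm {d1 d2 : ℕ} (M : Matrix (Fin d1) (Fin d2) ℝ) :
    linfNorm M ≤ maxNorm M := by
  refine le_csInf (maxNorm_set_nonempty M) ?_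
  rintro c ⟨k, U, V, hk, rfl, rfl⟩
  have hc : (0:ℝ) ≤ rowMaxNorm U * rowMaxNorm V :=
    mul_nonneg (rowMaxNorm_nonneg U) (rowMaxNorm_nonneg V)
  refine Real.iSup_le (fun i => Real.iSup_le (fun l => ?_) hc) hc
  exact abs_entry_le_prod U V i l

lemma exists_rank_fact {d1 d2 : ℕ} (M : Matrix (Fin d1) (Fin d2) ℝ) :
    ∃ (B : Matrix (Fin d1) (Fin M.rank) ℝ) (C : Matrix (Fin M.rank) (Fin d2) ℝ),
      M = B * C ∧ ∀ x : Fin M.rank → ℝ, x ≠ 0 → B *ᵥ x ≠ 0 := by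
  classical
  set R := LinearMap.range M.mulVecLin with hR
  have hfin : Module.finrank ℝ R = M.rank := rfl
  let b : Module.Basis (Fin M.rank) ℝ R := Module.finBasisOfFinrankEq ℝ R hfin
  have hcol : ∀ l : Fin d2, (fun i => M i l) ∈ R := by
    intro l
    refine ⟨Pi.single l 1, ?_⟩
    funext i
    simp [Matrix.mulVecLin_apply, Matrix.mulVec, dotProduct, Pi.single_apply]
  refine ⟨fun i j => (b j : Fin d1 → ℝ) i,
    fun j l => b.repr ⟨fun i => M i l, hcol l⟩ j, ?_, ?_⟩
  · ext i l
    change M i l = ∑ j, (b j : Fin d1 → ℝ) i * b.repr ⟨fun i => M i l, hcol l⟩ j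
    have := b.sum_repr ⟨fun i => M i l, hcol l⟩
    have h2 := congrArg (fun v : R => (v : Fin d1 → ℝ) i) this
    simp only [Submodule.coe_sum, Submodule.coe_smul, Finset.sum_apply, Pi.smul_apply,
      smul_eq_mul] at h2
    rw [← h2]
    exact Finset.sum_congr rfl fun j _ => mul_comm _ _
  · intro x hx hBx
    apply hx
    have hli : LinearIndependent ℝ (fun j => ((b j : Fin d1 → ℝ))) :=
      b.linearIndependent.map' R.subtype R.ker_subtype
    have := Fintype.linearIndependent_iff.mp hli x ?_
    · funext j; exact this j
    · funext i
      have h3 := congrFun hBx i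
      simp only [Matrix.mulVec, dotProduct] at h3
      simp only [Finset.sum_apply, Pi.smul_apply, smul_eq_mul, Pi.zero_apply]
      rw [show (0:Fin d1 → ℝ) i = 0 from rfl] at h3
      rw [← h3]
      exact Finset.sum_congr rfl fun j _ => mul_comm _ _

section Sigma
variable {n r : ℕ} (B : Matrix (Fin n) (Fin r) ℝ)

lemma Sigma_apply (μ : Fin n → ℝ) (j k : Fin r) :
    (Bᵀ * diagonal μ * B) j k = ∑ i, μ i * (B i j * B i k) := by
  rw [Matrix.mul_assoc, Matrix.mul_apply]
  refine Finset.sum_congr rfl fun i _ => ?_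
  rw [Matrix.diagonal_mul, Matrix.transpose_apply]
  ring

lemma Sigma_isHermitian (μ : Fin n → ℝ) : (Bᵀ * diagonal μ * B).IsHermitian := by
  ext j k
  simp only [Matrix.conjTranspose_apply, Sigma_apply, star_trivial]
  exact Finset.sum_congr rfl fun i _ => by ring

lemma Sigma_quadForm (μ : Fin n → ℝ) (x : Fin r → ℝ) :
    x ⬝ᵥ ((Bᵀ * diagonal μ * B) *ᵥ x) = ∑ i, μ i * ((B *ᵥ x) i) ^ 2 := by
  rw [← Matrix.mulVec_mulVec, ← Matrix.mulVec_mulVec, Matrix.dotProduct_mulVec,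
    Matrix.vecMul_transpose, dotProduct]
  refine Finset.sum_congr rfl fun i _ => ?_
  rw [Matrix.mulVec_diagonal]
  ring

lemma Sigma_posSemidef (μ : Fin n → ℝ) (hμ : ∀ i, 0 ≤ μ i) :
    (Bᵀ * diagonal μ * B).PosSemidef := by
  refine Matrix.PosSemidef.of_dotProduct_mulVec_nonneg (Sigma_isHermitian B μ) fun x => ?_
  rw [star_trivial, Sigma_quadForm]
  exact Finset.sum_nonneg fun i _ => mul_nonneg (hμ i) (sq_nonneg _)

lemma Sigma_posDef (μ : Fin n → ℝ) (hμ : ∀ i, 0 < μ i)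
    (hB : ∀ x : Fin r → ℝ, x ≠ 0 → B *ᵥ x ≠ 0) :
    (Bᵀ * diagonal μ * B).PosDef := by
  refine Matrix.PosDef.of_dotProduct_mulVec_pos (Sigma_isHermitian B μ) fun x hx => ?_
  rw [star_trivial, Sigma_quadForm]
  have hBx := hB x hx
  obtain ⟨i0, hi0⟩ : ∃ i0, (B *ᵥ x) i0 ≠ 0 := by
    by_contra h
    push_neg at h
    exact hBx (funext h)
  refine Finset.sum_pos' (fun i _ => mul_nonneg (hμ i).le (sq_nonneg _)) ⟨i0, Finset.mem_univ _, ?_⟩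
  exact mul_pos (hμ i0) (by positivity)

end Sigma

lemma det_add_vecMulVec {r : ℕ} (S : Matrix (Fin r) (Fin r) ℝ)
    (hdet : IsUnit S.det) (u v : Fin r → ℝ) :
    (S + vecMulVec u v).det = S.det * (1 + v ⬝ᵥ (S⁻¹ *ᵥ u)) := by
  have key : S * (1 + replicateCol (Fin 1) (S⁻¹ *ᵥ u) * replicateRow (Fin 1) v) = S + vecMulVec u v := by
    rw [Matrix.mul_add, Matrix.mul_one, ← Matrix.mul_assoc, ← Matrix.replicateCol_mulVec,
      Matrix.mulVec_mulVec, Matrix.mul_nonsing_inv S hdet, Matrix.one_mulVec]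
    exact congrArg (S + ·) (Matrix.vecMulVec_eq (Fin 1) u v).symm
  rw [← key, Matrix.det_mul]
  exact congrArg (S.det * ·) (Matrix.det_one_add_replicateCol_mul_replicateRow _ _)

lemma det_convex_vertex {r : ℕ} (hr : 0 < r) (S : Matrix (Fin r) (Fin r) ℝ)
    (hdet : IsUnit S.det) (w : Fin r → ℝ) (t : ℝ) (ht1 : t < 1) :
    ((1 - t) • S + t • vecMulVec w w).det =
      (1 - t) ^ (r - 1) * ((1 - t) + t * (w ⬝ᵥ (S⁻¹ *ᵥ w))) * S.det := by
  have h1 : (1 - t) ≠ 0 := by linarith [sub_pos.mpr ht1]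
  set s : ℝ := (1 - t)⁻¹ * t with hs
  have hst : (1 - t) * s = t := by rw [hs, ← mul_assoc, mul_inv_cancel₀ h1, one_mul]
  have step1 : (1 - t) • S + t • vecMulVec w w
      = (1 - t) • (S + vecMulVec (fun j => s * w j) w) := by
    ext j k
    simp only [Matrix.add_apply, Matrix.smul_apply, Matrix.vecMulVec_apply, smul_eq_mul]
    have h3 : (1 - t) * (s * w j) = t * w j := by rw [← mul_assoc, hst]
    linear_combination (-(w k)) * h3
  rw [step1, Matrix.det_smul, Fintype.card_fin, det_add_vecMulVec S hdet]
  have hsc : w ⬝ᵥ (S⁻¹ *ᵥ fun j => s * w j) = s * (w ⬝ᵥ (S⁻¹ *ᵥ w)) := by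
    simp only [Matrix.mulVec, dotProduct, Finset.mul_sum]
    refine Finset.sum_congr rfl fun j _ => Finset.sum_congr rfl fun k _ => by ring
  rw [hsc]
  have hpow : (1 - t) ^ r = (1 - t) ^ (r - 1) * (1 - t) := by
    rw [← pow_succ, Nat.sub_add_cancel hr]
  rw [hpow]
  have h2 : (1 - t) * (1 + s * (w ⬝ᵥ S⁻¹ *ᵥ w)) = (1 - t) + t * (w ⬝ᵥ S⁻¹ *ᵥ w) := by
    rw [mul_add, mul_one, ← mul_assoc, hst]
  calc (1 - t) ^ (r - 1) * (1 - t) * (S.det * (1 + s * (w ⬝ᵥ S⁻¹ *ᵥ w)))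
      = (1 - t) ^ (r - 1) * ((1 - t) * (1 + s * (w ⬝ᵥ S⁻¹ *ᵥ w))) * S.det := by ring
    _ = (1 - t) ^ (r - 1) * ((1 - t) + t * (w ⬝ᵥ S⁻¹ *ᵥ w)) * S.det := by rw [h2]

lemma q_le_of_poly_bound {r : ℕ} (hr : 1 ≤ r) (q : ℝ)
    (h : ∀ t : ℝ, 0 ≤ t → t < 1 → (1 - t) ^ (r - 1) * ((1 - t) + t * q) ≤ 1) :
    q ≤ r := by
  by_contra hq
  push_neg at hq
  have hr1 : (1 : ℝ) ≤ (r : ℝ) := by exact_mod_cast hr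
  set a : ℝ := (r : ℝ) - 1 with ha
  set bq : ℝ := q - 1 with hb
  have ha0 : 0 ≤ a := by linarith
  have hb0 : 0 < bq := by simp only [hb]; linarith
  have hqr : 0 < q - r := by linarith
  set D : ℝ := a * bq + (q - r) + 1 with hD
  have hD0 : 0 < D := by positivity
  set t0 : ℝ := (q - r) / D with ht0
  have ht0pos : 0 < t0 := div_pos hqr hD0
  have ht0lt1 : t0 < 1 := by
    rw [ht0, div_lt_one hD0]
    have : 0 < a * bq + 1 := by positivity
    linarith
  have hcast : ((r - 1 : ℕ) : ℝ) = a := by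
    rw [ha, Nat.cast_sub hr, Nat.cast_one]
  have hbern : 1 - a * t0 ≤ (1 - t0) ^ (r - 1) := by
    have := one_add_mul_le_pow (a := -t0) (by linarith) (r - 1)
    rw [hcast] at this
    calc 1 - a * t0 = 1 + a * (-t0) := by ring
    _ ≤ (1 + -t0) ^ (r - 1) := this
    _ = (1 - t0) ^ (r - 1) := by ring_nf
  have habD : a * bq * t0 < q - r := by
    have h2 : a * bq / D < 1 := by
      rw [div_lt_one hD0]; linarith
    calc a * bq * ((q - r) / D) = (a * bq / D) * (q - r) := by ring
    _ < 1 * (q - r) := by exact mul_lt_mul_of_pos_right h2 hqr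
    _ = q - r := by ring
  have hkey : 1 < (1 - a * t0) * (1 + bq * t0) := by nlinarith
  have hfac : (0:ℝ) < 1 + bq * t0 := by positivity
  have hchain : (1 - a * t0) * (1 + bq * t0) ≤ (1 - t0) ^ (r - 1) * (1 + bq * t0) :=
    mul_le_mul_of_nonneg_right hbern hfac.le
  have hht := h t0 ht0pos.le ht0lt1
  have : (1 - t0) + t0 * q = 1 + bq * t0 := by rw [hb]; ring
  rw [this] at hht
  linarith

lemma BXBt_diag {n r : ℕ} (B : Matrix (Fin n) (Fin r) ℝ) (X : Matrix (Fin r) (Fin r) ℝ)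
    (i : Fin n) :
    (B * X * Bᵀ) i i = (fun j => B i j) ⬝ᵥ (X *ᵥ fun j => B i j) := by
  rw [Matrix.mul_assoc, Matrix.mul_apply]
  simp only [Matrix.mul_apply, Matrix.transpose_apply, Matrix.mulVec, dotProduct]

lemma rank_zero_eq_zero {d1 d2 : ℕ} (M : Matrix (Fin d1) (Fin d2) ℝ) (h : M.rank = 0) :
    M = 0 := by
  have h1 : Module.finrank ℝ (LinearMap.range M.mulVecLin) = 0 := h
  have h2 : LinearMap.range M.mulVecLin = ⊥ := Submodule.finrank_eq_zero.mp h1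
  have h3 : M.mulVecLin = 0 := LinearMap.range_eq_bot.mp h2
  ext i j
  have h4 : M.mulVecLin (Pi.single j 1) = 0 := by rw [h3]; rfl
  have h5 := congrFun h4 i
  simpa [Matrix.mulVecLin_apply, Matrix.mulVec, dotProduct, Pi.single_apply] using h5

lemma maxNorm_le_sqrt_rank_mul_linf {d1 d2 : ℕ} (M : Matrix (Fin d1) (Fin d2) ℝ) :
    maxNorm M ≤ Real.sqrt (M.rank) * linfNorm M := by
  classical
  rcases Nat.eq_zero_or_pos M.rank with hr0 | hr
  · have hM0 : M = 0 := rank_zero_eq_zero M hr0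
    have h0 : maxNorm M ≤ 0 := by
      have hmem : maxNorm M ≤ rowMaxNorm (0 : Matrix (Fin d1) (Fin 1) ℝ) *
          rowMaxNorm (0 : Matrix (Fin d2) (Fin 1) ℝ) := by
        refine maxNorm_le_of_mem M 0 0 one_pos ?_
        rw [hM0]; simp
      have hz : rowMaxNorm (0 : Matrix (Fin d1) (Fin 1) ℝ) = 0 :=
        le_antisymm (Real.iSup_le (fun i => by simp) le_rfl) (rowMaxNorm_nonneg _)
      have hz2 : rowMaxNorm (0 : Matrix (Fin d2) (Fin 1) ℝ) = 0 :=
        le_antisymm (Real.iSup_le (fun i => by simp) le_rfl) (rowMaxNorm_nonneg _)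
      rw [hz, hz2, mul_zero] at hmem
      exact hmem
    refine h0.trans ?_
    rw [hr0]
    simp [linfNorm_nonneg M]
  · obtain ⟨B, C, hMBC, hB⟩ := exists_rank_fact M
    have hd1 : 0 < d1 := by
      have := Matrix.rank_le_card_height M
      rw [Fintype.card_fin] at this
      omega
    set f : (Fin d1 → ℝ) → ℝ := fun μ => (Bᵀ * diagonal μ * B).det with hf
    have hcont : Continuous f := by
      have h1 : Continuous fun μ : Fin d1 → ℝ => diagonal μ := continuous_id.matrix_diagonal
      have h2 : Continuous fun μ : Fin d1 → ℝ => Bᵀ * diagonal μ :=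
        Continuous.matrix_mul continuous_const h1
      have h3 : Continuous fun μ : Fin d1 → ℝ => Bᵀ * diagonal μ * B :=
        Continuous.matrix_mul h2 continuous_const
      exact h3.matrix_det
    have hne : (stdSimplex ℝ (Fin d1)).Nonempty :=
      ⟨Pi.single ⟨0, hd1⟩ 1, single_mem_stdSimplex ℝ _⟩
    obtain ⟨μ, hμS, hmax⟩ :=
      (isCompact_stdSimplex ℝ (Fin d1)).exists_isMaxOn hne hcont.continuousOn
    have hμ0 : ∀ i, 0 ≤ μ i := hμS.1
    have hμsum : ∑ i, μ i = 1 := hμS.2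
    have hd1R : (0:ℝ) < (d1 : ℝ) := by exact_mod_cast hd1
    have hμuS : (fun _ : Fin d1 => (d1 : ℝ)⁻¹) ∈ stdSimplex ℝ (Fin d1) := by
      constructor
      · intro i
        simp only
        positivity
      · simp only [Finset.sum_const, Finset.card_fin, nsmul_eq_mul]
        field_simp
    have hdetu : 0 < f (fun _ : Fin d1 => (d1 : ℝ)⁻¹) :=
      (Sigma_posDef B (fun _ => (d1 : ℝ)⁻¹) (fun i => by positivity) hB).det_pos
    have hdetμ : 0 < (Bᵀ * diagonal μ * B).det := lt_of_lt_of_le hdetu (hmax hμuS)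
    set Sg : Matrix (Fin M.rank) (Fin M.rank) ℝ := Bᵀ * diagonal μ * B with hSg
    have hPSD : Sg.PosSemidef := Sigma_posSemidef B μ hμ0
    have hdet_unit : IsUnit Sg.det := hdetμ.ne'.isUnit
    have hq : ∀ i : Fin d1, (fun j => B i j) ⬝ᵥ (Sg⁻¹ *ᵥ fun j => B i j) ≤ (M.rank : ℝ) := by
      intro i
      refine q_le_of_poly_bound hr _ (fun t ht0 ht1 => ?_)
      set μt : Fin d1 → ℝ := fun i' => (1 - t) * μ i' + t * (Pi.single i (1:ℝ) : Fin d1 → ℝ) i' with hμt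
      have hsingle_sum : ∑ i', (Pi.single i (1:ℝ) : Fin d1 → ℝ) i' = 1 := by
        simp [Pi.single_apply]
      have hμtS : μt ∈ stdSimplex ℝ (Fin d1) := by
        constructor
        · intro i'
          have hs : (0:ℝ) ≤ (Pi.single i (1:ℝ) : Fin d1 → ℝ) i' := by
            rcases eq_or_ne i' i with h | h <;> simp [h, Pi.single_apply]
          exact add_nonneg (mul_nonneg (by linarith) (hμ0 i')) (mul_nonneg ht0 hs)
        · simp only [hμt]
          rw [Finset.sum_add_distrib, ← Finset.mul_sum, ← Finset.mul_sum, hμsum,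
            hsingle_sum]
          ring
      have hlin : Bᵀ * diagonal μt * B
          = (1 - t) • Sg + t • vecMulVec (fun j => B i j) (fun j => B i j) := by
        ext j k
        simp only [Matrix.add_apply, Matrix.smul_apply, hSg, Sigma_apply,
          Matrix.vecMulVec_apply, smul_eq_mul]
        calc ∑ i', μt i' * (B i' j * B i' k)
            = ∑ i', ((1 - t) * (μ i' * (B i' j * B i' k))
              + (if i' = i then t * (B i' j * B i' k) else 0)) := by
              refine Finset.sum_congr rfl fun i' _ => ?_
              rcases eq_or_ne i' i with h | h <;>
                simp [hμt, h, Pi.single_apply] <;> ring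
          _ = (1 - t) * ∑ i', μ i' * (B i' j * B i' k) + t * (B i j * B i k) := by
              rw [Finset.sum_add_distrib, ← Finset.mul_sum, Finset.sum_ite_eq' Finset.univ]
              simp
      have htt : f μt ≤ f μ := hmax hμtS
      simp only [hf] at htt
      rw [hlin, det_convex_vertex hr Sg hdet_unit (fun j => B i j) t ht1] at htt
      exact (mul_le_iff_le_one_left hdetμ).mp htt
    obtain ⟨S, hSsq, hSherm⟩ : ∃ S : Matrix (Fin M.rank) (Fin M.rank) ℝ,
        S * S = Sg ∧ S.IsHermitian := by
      open scoped MatrixOrder in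
      exact ⟨CFC.sqrt Sg, CFC.sqrt_mul_sqrt_self Sg hPSD.nonneg, (CFC.sqrt_nonneg Sg).posSemidef.1⟩
    have hSt : Sᵀ = S := by
      ext a b
      have := congrFun (congrFun hSherm a) b
      simpa [Matrix.conjTranspose_apply] using this
    have hdetS : IsUnit S.det := by
      have hss : S.det * S.det = Sg.det := by rw [← Matrix.det_mul, hSsq]
      have hne0 : S.det ≠ 0 := by
        intro h
        rw [h, mul_zero] at hss
        exact hdetμ.ne' hss.symm
      exact hne0.isUnit
    set U : Matrix (Fin d1) (Fin M.rank) ℝ := B * S⁻¹ with hU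
    set V : Matrix (Fin d2) (Fin M.rank) ℝ := (S * C)ᵀ with hV
    have hfact : M = U * Vᵀ := by
      rw [hU, hV, Matrix.transpose_transpose, Matrix.mul_assoc, ← Matrix.mul_assoc S⁻¹ S C,
        Matrix.nonsing_inv_mul S hdetS, Matrix.one_mul, ← hMBC]
    have hSinv : S⁻¹ * S⁻¹ = Sg⁻¹ := by rw [← hSsq, Matrix.mul_inv_rev]
    have hUU : U * Uᵀ = B * Sg⁻¹ * Bᵀ := by
      rw [hU, Matrix.transpose_mul, Matrix.transpose_nonsing_inv, hSt, Matrix.mul_assoc,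
        ← Matrix.mul_assoc S⁻¹ S⁻¹ Bᵀ, hSinv, ← Matrix.mul_assoc]
    have hrowU : ∀ i : Fin d1, ∑ j, (U i j) ^ 2 ≤ (M.rank : ℝ) := by
      intro i
      have h1 : ∑ j, (U i j) ^ 2 = (U * Uᵀ) i i := by
        rw [Matrix.mul_apply]
        exact Finset.sum_congr rfl fun j _ => by rw [Matrix.transpose_apply, sq]
      rw [h1, hUU, BXBt_diag]
      exact hq i
    have hlinf : 0 ≤ linfNorm M := linfNorm_nonneg M
    have hVV : V * Vᵀ = Mᵀ * diagonal μ * M := by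
      rw [hV, Matrix.transpose_transpose, Matrix.transpose_mul, Matrix.mul_assoc,
        ← Matrix.mul_assoc Sᵀ S C, hSt, hSsq, hSg]
      conv_rhs => rw [hMBC, Matrix.transpose_mul]
      simp only [Matrix.mul_assoc]
    have hrowV : ∀ l : Fin d2, ∑ j, (V l j) ^ 2 ≤ (linfNorm M) ^ 2 := by
      intro l
      have h1 : ∑ j, (V l j) ^ 2 = (V * Vᵀ) l l := by
        rw [Matrix.mul_apply]
        exact Finset.sum_congr rfl fun j _ => by rw [Matrix.transpose_apply, sq]
      rw [h1, hVV, Sigma_apply]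
      calc ∑ i, μ i * (M i l * M i l)
          ≤ ∑ i, μ i * (linfNorm M) ^ 2 := by
            refine Finset.sum_le_sum fun i _ => ?_
            refine mul_le_mul_of_nonneg_left ?_ (hμ0 i)
            have h := abs_entry_le_linfNorm M i l
            calc M i l * M i l = |M i l| ^ 2 := by rw [sq_abs]; ring
              _ ≤ (linfNorm M) ^ 2 := pow_le_pow_left₀ (abs_nonneg _) h 2
        _ = linfNorm M ^ 2 := by rw [← Finset.sum_mul, hμsum, one_mul]
    have hUb : rowMaxNorm U ≤ Real.sqrt (M.rank : ℝ) :=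
      Real.iSup_le (fun i => Real.sqrt_le_sqrt (hrowU i)) (Real.sqrt_nonneg _)
    have hVb : rowMaxNorm V ≤ linfNorm M := by
      refine Real.iSup_le (fun l => ?_) hlinf
      have := Real.sqrt_le_sqrt (hrowV l)
      rwa [Real.sqrt_sq hlinf] at this
    refine (maxNorm_le_of_mem M U V hr hfact).trans ?_
    exact mul_le_mul hUb hVb (rowMaxNorm_nonneg V) (Real.sqrt_nonneg _)


/-- for every real matrix `M`,
`‖M‖_∞ ≤ ‖M‖_max ≤ √(rank M) · ‖M‖_∞`. -/
theorem linf_le_maxNorm_le_sqrt_rank_mul_linf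
    {d1 d2 : ℕ} (M : Matrix (Fin d1) (Fin d2) ℝ) :
    linfNorm M ≤ maxNorm M ∧ maxNorm M ≤ Real.sqrt (M.rank) * linfNorm M :=
  ⟨linfNorm_le_maxNorm M, maxNorm_le_sqrt_rank_mul_linf M⟩
end

section
/- Let α > 0, let F : ℝ → (0,1) be differentiable on [−α, α], and let s, t be real numbers with |s| ≤ α and |t| ≤ α. Then the squared Hellinger distance satisfies d_H²(F(s); F(t)) ≥ ( inf_{|x|≤α} (F'(x))² / (8 F(x)(1−F(x))) ) · (s − t)². -/
open Real Set

/-- The squared Hellinger distance between two Bernoulli parameters. -/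
noncomputable def hellingerSq (p q : ℝ) : ℝ :=
  (Real.sqrt p - Real.sqrt q) ^ 2 + (Real.sqrt (1 - p) - Real.sqrt (1 - q)) ^ 2

lemma trig_key {u : ℝ} (h : |u| ≤ π / 2) : u ^ 2 / 2 ≤ 2 - 2 * Real.cos u := by
  wlog hu : 0 ≤ u generalizing u
  · have := this (u := -u) (by rwa [abs_neg]) (by linarith [not_le.mp hu])
    simpa using this
  rcases eq_or_lt_of_le hu with h0 | h0
  · simp [← h0]
  · have hu2 : u ≤ π / 2 := (abs_le.mp h).2
    have hpi : π < 3.15 := by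
      have := Real.pi_lt_d2; linarith
    have hs : u / 2 - (u / 2) ^ 3 / 4 < Real.sin (u / 2) := by
      have := Real.sin_gt_sub_cube (by linarith : 0 < u / 2)
      linarith [pow_pos (by linarith : (0:ℝ) < u / 2) 3]
    have hcos : 2 - 2 * Real.cos u = 4 * Real.sin (u / 2) ^ 2 := by
      have h1 := Real.cos_sq (u / 2)
      have h2 := Real.sin_sq (u / 2)
      rw [show 2 * (u / 2) = u by ring] at h1
      linarith
    have husq : u ^ 2 ≤ 2.481 := by nlinarith
    have hcube : u ^ 3 ≤ 2.481 * u := by nlinarith [mul_le_mul_of_nonneg_left husq hu]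
    have hsin_pos : (0:ℝ) < u / 2 - (u / 2) ^ 3 / 4 := by nlinarith
    have h4 : (u / 2 - (u / 2) ^ 3 / 4) ^ 2 < Real.sin (u / 2) ^ 2 := by nlinarith
    rw [hcos]
    nlinarith [h4, mul_le_mul_of_nonneg_left husq (sq_nonneg u), pow_nonneg hu 6, sq_nonneg u]

lemma hasDerivAt_arcsinSqrt (F : ℝ → ℝ) (hrange : ∀ x, 0 < F x ∧ F x < 1) {x : ℝ}
    (hx : DifferentiableAt ℝ F x) :
    HasDerivAt (fun y => Real.arcsin (Real.sqrt (F y)))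
      (deriv F x / (2 * Real.sqrt (F x) * Real.sqrt (1 - F x))) x := by
  obtain ⟨h0, h1⟩ := hrange x
  have hF : HasDerivAt F (deriv F x) x := hx.hasDerivAt
  have hsqrt : HasDerivAt (fun y => Real.sqrt (F y)) (deriv F x / (2 * Real.sqrt (F x))) x :=
    hF.sqrt (ne_of_gt h0)
  have hs0 : (0:ℝ) < Real.sqrt (F x) := Real.sqrt_pos.mpr h0
  have h1s : (0:ℝ) < Real.sqrt (1 - F x) := Real.sqrt_pos.mpr (by linarith)
  have hs1 : Real.sqrt (F x) < 1 := by
    have : Real.sqrt (F x) < Real.sqrt 1 := Real.sqrt_lt_sqrt h0.le h1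
    simpa using this
  have harcsin : HasDerivAt Real.arcsin (1 / Real.sqrt (1 - Real.sqrt (F x) ^ 2))
      (Real.sqrt (F x)) :=
    Real.hasDerivAt_arcsin (by linarith) (ne_of_lt hs1)
  have hcomp := harcsin.comp x hsqrt
  have heq : 1 / Real.sqrt (1 - Real.sqrt (F x) ^ 2) * (deriv F x / (2 * Real.sqrt (F x)))
      = deriv F x / (2 * Real.sqrt (F x) * Real.sqrt (1 - F x)) := by
    rw [Real.sq_sqrt h0.le, one_div, inv_mul_eq_div, div_div]
  rw [← heq]
  exact hcomp

/-- if `F : ℝ → (0,1)` is differentiable on `[−α, α]` and `|s|, |t| ≤ α`, then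
`d_H²(F(s); F(t)) ≥ ( inf_{|x|≤α} (F'(x))² / (8 F(x)(1−F(x))) ) · (s − t)²`. -/
theorem hellingerSq_lower_bound (α : ℝ) (hα : 0 < α) (F : ℝ → ℝ)
    (hrange : ∀ x, 0 < F x ∧ F x < 1)
    (hdiff : ∀ x ∈ Set.Icc (-α) α, DifferentiableAt ℝ F x)
    (s t : ℝ) (hs : |s| ≤ α) (ht : |t| ≤ α) :
    sInf ((fun x => (deriv F x) ^ 2 / (8 * F x * (1 - F x))) '' Set.Icc (-α) α) *
        (s - t) ^ 2 ≤
      hellingerSq (F s) (F t) := by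
  have hφ_nonneg : ∀ x, 0 ≤ (deriv F x) ^ 2 / (8 * F x * (1 - F x)) := by
    intro x
    obtain ⟨h0, h1⟩ := hrange x
    apply div_nonneg (sq_nonneg _)
    nlinarith
  rcases eq_or_ne s t with rfl | hst
  · simp [hellingerSq]
  obtain ⟨hsl, hsr⟩ := abs_le.mp hs
  obtain ⟨htl, htr⟩ := abs_le.mp ht
  set g : ℝ → ℝ := fun y => Real.arcsin (Real.sqrt (F y)) with hgdef
  set a := min s t with hadef
  set b := max s t with hbdef
  have hab : a < b := min_lt_max.mpr hst
  have hsub : Set.Icc a b ⊆ Set.Icc (-α) α := by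
    apply Set.Icc_subset_Icc
    · exact le_min (by linarith) (by linarith)
    · exact max_le hsr htr
  have hgderiv : ∀ x ∈ Set.Icc (-α) α,
      HasDerivAt g (deriv F x / (2 * Real.sqrt (F x) * Real.sqrt (1 - F x))) x :=
    fun x hx => hasDerivAt_arcsinSqrt F hrange (hdiff x hx)
  have hcont : ContinuousOn g (Set.Icc a b) := fun x hx =>
    ((hgderiv x (hsub hx)).differentiableAt.continuousAt).continuousWithinAt
  have hdiff' : DifferentiableOn ℝ g (Set.Ioo a b) := fun x hx =>
    ((hgderiv x (hsub (Set.Ioo_subset_Icc_self hx))).differentiableAt).differentiableWithinAt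
  obtain ⟨c, hc, hderiv⟩ := exists_deriv_eq_slope g hab hcont hdiff'
  have hcIcc : c ∈ Set.Icc (-α) α := hsub (Set.Ioo_subset_Icc_self hc)
  obtain ⟨hc0, hc1⟩ := hrange c
  have hsc : (0:ℝ) < Real.sqrt (F c) := Real.sqrt_pos.mpr hc0
  have hsc1 : (0:ℝ) < Real.sqrt (1 - F c) := Real.sqrt_pos.mpr (by linarith)
  have hdg : deriv g c = deriv F c / (2 * Real.sqrt (F c) * Real.sqrt (1 - F c)) :=
    (hgderiv c hcIcc).deriv
  have hslope : g b - g a = deriv g c * (b - a) := by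
    rw [hderiv, div_mul_cancel₀ _ (sub_ne_zero.mpr hab.ne')]
  have hgst : (g s - g t) ^ 2 = (deriv g c) ^ 2 * (s - t) ^ 2 := by
    have hba : (g b - g a) ^ 2 = (deriv g c) ^ 2 * (b - a) ^ 2 := by rw [hslope]; ring
    rcases le_total s t with h | h
    · have ha : a = s := min_eq_left h
      have hb : b = t := max_eq_right h
      rw [ha, hb] at hba
      calc (g s - g t) ^ 2 = (g t - g s) ^ 2 := by ring
        _ = (deriv g c) ^ 2 * (t - s) ^ 2 := hba
        _ = (deriv g c) ^ 2 * (s - t) ^ 2 := by ring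
    · have ha : a = t := min_eq_right h
      have hb : b = s := max_eq_left h
      rw [ha, hb] at hba
      exact hba
  have hsin : ∀ y, Real.sin (g y) = Real.sqrt (F y) := by
    intro y
    obtain ⟨h0, h1⟩ := hrange y
    refine Real.sin_arcsin (le_trans (by norm_num) (Real.sqrt_nonneg _)) ?_
    rw [show (1:ℝ) = Real.sqrt 1 by simp]
    exact Real.sqrt_le_sqrt h1.le
  have hcos : ∀ y, Real.cos (g y) = Real.sqrt (1 - F y) := by
    intro y
    obtain ⟨h0, h1⟩ := hrange y
    simp only [hgdef]
    rw [Real.cos_arcsin, Real.sq_sqrt h0.le]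
  have hhel : hellingerSq (F s) (F t) = 2 - 2 * Real.cos (g s - g t) := by
    rw [hellingerSq, ← hsin s, ← hsin t, ← hcos s, ← hcos t, Real.cos_sub]
    have h1 := Real.sin_sq_add_cos_sq (g s)
    have h2 := Real.sin_sq_add_cos_sq (g t)
    linear_combination h1 + h2
  have hgrange : ∀ y, g y ∈ Set.Icc (0:ℝ) (π / 2) := fun y =>
    ⟨Real.arcsin_nonneg.mpr (Real.sqrt_nonneg _), Real.arcsin_le_pi_div_two _⟩
  have habs : |g s - g t| ≤ π / 2 := by
    obtain ⟨h1, h2⟩ := hgrange s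
    obtain ⟨h3, h4⟩ := hgrange t
    rw [abs_le]
    constructor <;> linarith
  have hkey : (g s - g t) ^ 2 / 2 ≤ hellingerSq (F s) (F t) := by
    rw [hhel]
    exact trig_key habs
  have h4 : (2 * Real.sqrt (F c) * Real.sqrt (1 - F c)) ^ 2 = 4 * F c * (1 - F c) := by
    rw [mul_pow, mul_pow, Real.sq_sqrt hc0.le, Real.sq_sqrt (by linarith : (0:ℝ) ≤ 1 - F c)]
    ring
  have h8 : (deriv F c) ^ 2 / (8 * F c * (1 - F c))
      = (deriv F c) ^ 2 / (4 * F c * (1 - F c)) / 2 := by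
    rw [div_div]
    congr 1
    ring
  have hφc : (deriv F c) ^ 2 / (8 * F c * (1 - F c)) * (s - t) ^ 2 = (g s - g t) ^ 2 / 2 := by
    rw [hgst, hdg, div_pow, h4, h8]
    ring
  have hmem : (deriv F c) ^ 2 / (8 * F c * (1 - F c)) ∈
      (fun x => (deriv F x) ^ 2 / (8 * F x * (1 - F x))) '' Set.Icc (-α) α := ⟨c, hcIcc, rfl⟩
  have hinf : sInf ((fun x => (deriv F x) ^ 2 / (8 * F x * (1 - F x))) '' Set.Icc (-α) α)
      ≤ (deriv F c) ^ 2 / (8 * F c * (1 - F c)) := by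
    apply csInf_le _ hmem
    exact ⟨0, fun y ⟨x, _, hx⟩ => hx ▸ hφ_nonneg x⟩
  calc sInf ((fun x => (deriv F x) ^ 2 / (8 * F x * (1 - F x))) '' Set.Icc (-α) α) * (s - t) ^ 2
      ≤ (deriv F c) ^ 2 / (8 * F c * (1 - F c)) * (s - t) ^ 2 :=
        mul_le_mul_of_nonneg_right hinf (sq_nonneg _)
    _ = (g s - g t) ^ 2 / 2 := hφc
    _ ≤ hellingerSq (F s) (F t) := hkey
end

section
/- Let F : ℝ → (0,1) be differentiable with F' nonincreasing on [0, ∞). Then for all real numbers 0 ≤ s ≤ t, the Kullback–Leibler divergence satisfies K(F(t) ‖ F(s)) ≤ (F(t) − F(s))² / ( F(s)(1 − F(s)) ) ≤ (t − s)² (F'(s))² / ( F(s)(1 − F(s)) ). -/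
/-- The Kullback–Leibler divergence between two Bernoulli parameters `p, q ∈ (0,1)`. -/
noncomputable def klBer (p q : ℝ) : ℝ :=
  p * Real.log (p / q) + (1 - p) * Real.log ((1 - p) / (1 - q))

lemma klBer_le_chiSq (p q : ℝ) (hp : 0 < p) (hp1 : p < 1) (hq : 0 < q) (hq1 : q < 1) :
    klBer p q ≤ (p - q) ^ 2 / (q * (1 - q)) := by
  have h1 : Real.log (p / q) ≤ p / q - 1 :=
    Real.log_le_sub_one_of_pos (div_pos hp hq)
  have h2 : Real.log ((1 - p) / (1 - q)) ≤ (1 - p) / (1 - q) - 1 :=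
    Real.log_le_sub_one_of_pos (div_pos (by linarith) (by linarith))
  have key : klBer p q ≤ p * (p / q - 1) + (1 - p) * ((1 - p) / (1 - q) - 1) := by
    unfold klBer
    gcongr <;> linarith
  have heq : p * (p / q - 1) + (1 - p) * ((1 - p) / (1 - q) - 1)
      = (p - q) ^ 2 / (q * (1 - q)) := by
    have h1q : (1:ℝ) - q ≠ 0 := by linarith
    field_simp [hq.ne', h1q]
    ring
  linarith

/-- if `F : ℝ → (0,1)` is differentiable with `F'` nonincreasing on `[0,∞)`,
then for `0 ≤ s ≤ t`,
`K(F(t) ‖ F(s)) ≤ (F(t) − F(s))²/(F(s)(1−F(s))) ≤ (t−s)² (F'(s))²/(F(s)(1−F(s)))`. -/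
theorem klBer_le_of_deriv_antitone (F : ℝ → ℝ) (hdiff : Differentiable ℝ F)
    (hrange : ∀ x, 0 < F x ∧ F x < 1)
    (hanti : ∀ x y : ℝ, 0 ≤ x → x ≤ y → deriv F y ≤ deriv F x)
    (s t : ℝ) (hs : 0 ≤ s) (hst : s ≤ t) :
    klBer (F t) (F s) ≤ (F t - F s) ^ 2 / (F s * (1 - F s)) ∧
      (F t - F s) ^ 2 / (F s * (1 - F s)) ≤
        (t - s) ^ 2 * (deriv F s) ^ 2 / (F s * (1 - F s)) := by
  obtain ⟨hq, hq1⟩ := hrange s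
  obtain ⟨hp, hp1⟩ := hrange t
  have hden : 0 < F s * (1 - F s) := mul_pos hq (by linarith)
  -- deriv F is nonneg on [0, ∞)
  have hnonneg : ∀ x : ℝ, 0 ≤ x → 0 ≤ deriv F x := by
    intro x hx
    by_contra hneg
    push_neg at hneg
    set d := deriv F x with hd
    set y := x + (F x + 1) / (-d) with hy
    have hxy : x < y := by
      have h0 : 0 < (F x + 1) / (-d) :=
        div_pos (by linarith [(hrange x).1]) (by linarith)
      rw [hy]; linarith
    obtain ⟨c, hc, hc'⟩ := exists_deriv_eq_slope F hxy
      (hdiff.continuous.continuousOn) (hdiff.differentiableOn)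
    have hcx : deriv F c ≤ d := hanti x c hx hc.1.le
    have hslope : (F y - F x) / (y - x) ≤ d := hc' ▸ hcx
    have hyx : 0 < y - x := by linarith
    have : F y - F x ≤ d * (y - x) := by
      rw [div_le_iff₀ hyx] at hslope; linarith [hslope]
    have hyxval : y - x = (F x + 1) / (-d) := by rw [hy]; ring
    have : F y ≤ F x + d * ((F x + 1) / (-d)) := by rw [← hyxval]; linarith
    have hdne : d ≠ 0 := by linarith
    have hde : d * ((F x + 1) / (-d)) = -(F x + 1) := by
      rw [div_neg, mul_neg, ← mul_div_assoc, mul_comm, mul_div_assoc, div_self hdne, mul_one]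
    have : F y ≤ -1 := by linarith [hde ▸ ‹F y ≤ F x + d * ((F x + 1) / (-d))›]
    linarith [(hrange y).1]
  constructor
  · exact klBer_le_chiSq _ _ hp hp1 hq hq1
  · rcases eq_or_lt_of_le hst with h | h
    · subst h; simp
    · obtain ⟨c, hc, hc'⟩ := exists_deriv_eq_slope F h
        (hdiff.continuous.continuousOn) (hdiff.differentiableOn)
      have h1 : 0 ≤ deriv F c := hnonneg c (by linarith [hc.1])
      have h2 : deriv F c ≤ deriv F s := hanti s c hs hc.1.le
      have hts : 0 < t - s := by linarith
      have hFts : F t - F s = deriv F c * (t - s) := by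
        field_simp at hc'; linarith [hc']
      have : (F t - F s) ^ 2 ≤ (t - s) ^ 2 * (deriv F s) ^ 2 := by
        rw [hFts, mul_pow]
        have : (deriv F c) ^ 2 ≤ (deriv F s) ^ 2 := by
          apply pow_le_pow_left₀ h1 h2
        nlinarith [sq_nonneg (t - s)]
      exact (div_le_div_iff_of_pos_right hden).mpr this
end
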